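/- For every integer n ≥ 1, the number of Catalan words of length n avoiding the vincular pattern 1-12 equals 2^{n−1}, the number avoiding 1-21 equals 2^{n−1}, and the number avoiding 1-23 equals 2^{n−1}. -/

import Mathlib

/-- A Catalan word: a word of positive integers starting with 1 in which each
letter exceeds its predecessor by at most 1. -/
def IsCatalanWord {n : ℕ} (w : Fin n → ℕ) : Prop :=
  (∀ i, 1 ≤ w i) ∧ (∀ h : 0 < n, w ⟨0, h⟩ = 1) ∧
  ∀ i : ℕ, ∀ h : i + 1 < n, w ⟨i + 1, h⟩ ≤ w ⟨i, by omega⟩ + 1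

/-- `w` contains the vincular pattern 1-12: there are indices `i < j` with
`w i = w j < w (j+1)`. -/
def Contains1_12 {n : ℕ} (w : Fin n → ℕ) : Prop :=
  ∃ i j : ℕ, ∃ hj : j + 1 < n, ∃ hij : i < j,
    w ⟨i, by omega⟩ = w ⟨j, by omega⟩ ∧ w ⟨j, by omega⟩ < w ⟨j + 1, hj⟩

/-- `w` contains the vincular pattern 1-21: there are indices `i < j` with
`w i = w (j+1) < w j`. -/
def Contains1_21 {n : ℕ} (w : Fin n → ℕ) : Prop :=
  ∃ i j : ℕ, ∃ hj : j + 1 < n, ∃ hij : i < j,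
    w ⟨i, by omega⟩ = w ⟨j + 1, hj⟩ ∧ w ⟨j + 1, hj⟩ < w ⟨j, by omega⟩

/-- `w` contains the vincular pattern 1-23: there are indices `i < j` with
`w i < w j < w (j+1)`. -/
def Contains1_23 {n : ℕ} (w : Fin n → ℕ) : Prop :=
  ∃ i j : ℕ, ∃ hj : j + 1 < n, ∃ hij : i < j,
    w ⟨i, by omega⟩ < w ⟨j, by omega⟩ ∧ w ⟨j, by omega⟩ < w ⟨j + 1, hj⟩

lemma card_bij {n : ℕ} (S : Set (Fin n → ℕ))
    (f : (Fin (n-1) → Bool) → (Fin n → ℕ)) (hinj : Function.Injective f)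
    (hr : Set.range f = S) : S.ncard = 2 ^ (n-1) := by
  rw [← hr, ← Set.image_univ, Set.ncard_image_of_injective _ hinj, Set.ncard_univ]
  simp [Nat.card_eq_fintype_card]

def bext {n : ℕ} (b : Fin n → Bool) (t : ℕ) : Bool := if h : t < n then b ⟨t, h⟩ else false

lemma bext_lt {n : ℕ} (b : Fin n → Bool) {t : ℕ} (h : t < n) : bext b t = b ⟨t, h⟩ := dif_pos h

lemma catalan_ivt {n : ℕ} {w : Fin n → ℕ} (hw : IsCatalanWord w) :
    ∀ t : ℕ, ∀ ht : t < n, ∀ u : ℕ, 1 ≤ u → u ≤ w ⟨t, ht⟩ →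
      ∃ i : ℕ, ∃ hi : i ≤ t, w ⟨i, by omega⟩ = u := by
  intro t
  induction t with
  | zero =>
    intro ht u hu1 hu2
    have h0 := hw.2.1 ht
    exact ⟨0, le_refl 0, by omega⟩
  | succ t ih =>
    intro ht u hu1 hu2
    by_cases hc : u ≤ w ⟨t, by omega⟩
    · obtain ⟨i, hi, hwi⟩ := ih (by omega) u hu1 hc
      exact ⟨i, by omega, hwi⟩
    · have hstep := hw.2.2 t ht
      refine ⟨t + 1, le_refl _, by omega⟩

/-- predicate: position `t` is a `true` bit -/
def Pt {N : ℕ} (b : Fin N → Bool) (t : ℕ) : Prop := bext b t = true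

/-- predicate: position `t` is a `false` bit (within range) -/
def Pf {N : ℕ} (b : Fin N → Bool) (t : ℕ) : Prop := t < N ∧ bext b t = false

instance {N : ℕ} (b : Fin N → Bool) : DecidablePred (Pt b) := fun _ => Bool.decEq _ _

instance {N : ℕ} (b : Fin N → Bool) : DecidablePred (Pf b) := fun _ => instDecidableAnd

lemma count_compl {N : ℕ} (b : Fin N → Bool) :
    ∀ M, M ≤ N → Nat.count (Pt b) M + Nat.count (Pf b) M = M := by
  intro M
  induction M with
  | zero => simp
  | succ M ih =>
    intro hM
    rw [Nat.count_succ, Nat.count_succ]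
    have h1 := ih (by omega)
    have hMn : M < N := by omega
    cases hb : bext b M with
    | true => simp [Pt, Pf, hb]; omega
    | false => simp [Pt, Pf, hb, hMn]; omega

lemma Pf_finite {N : ℕ} (b : Fin N → Bool) : (Set.ofPred (Pf b)).Finite :=
  Set.Finite.subset (Set.finite_Iio N) (fun z hz => hz.1)

/-- `k` = 1 + number of true bits -/
def ktr {N : ℕ} (b : Fin N → Bool) : ℕ := 1 + Nat.count (Pt b) N

lemma ktr_ge1 {N : ℕ} (b : Fin N → Bool) : 1 ≤ ktr b := by unfold ktr; omega

lemma ktr_le {N : ℕ} (b : Fin N → Bool) : ktr b ≤ N + 1 := by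
  have := Nat.count_le (p := Pt b) (n := N)
  unfold ktr; omega

lemma card_Pf {N : ℕ} (b : Fin N → Bool) : (Pf_finite b).toFinset.card = N - (ktr b - 1) := by
  have h1 : (Pf_finite b).toFinset = (Finset.range N).filter (fun z => Pf b z) := by
    ext z
    simp only [Set.Finite.mem_toFinset, Set.mem_setOf_eq, Finset.mem_filter, Finset.mem_range]
    constructor
    · intro hz; exact ⟨hz.1, hz⟩
    · intro hz; exact hz.2
  rw [h1, ← Nat.count_eq_card_filter_range]
  have h2 := count_compl b N le_rfl
  unfold ktr
  omega

lemma card_Pf' {N : ℕ} (b : Fin N → Bool) (hf : (Set.ofPred (Pf b)).Finite) :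
    hf.toFinset.card = N - (ktr b - 1) := by
  rw [show hf.toFinset = (Pf_finite b).toFinset by ext z; simp [Set.Finite.mem_toFinset]]
  exact card_Pf b

/-- member of Pf -/
lemma nth_Pf_mem {N : ℕ} (b : Fin N → Bool) {t : ℕ} (ht : t < N - (ktr b - 1)) :
    Pf b (Nat.nth (Pf b) t) :=
  Nat.nth_mem_of_lt_card (Pf_finite b) (by rw [card_Pf]; exact ht)

lemma nth_Pf_lt {N : ℕ} (b : Fin N → Bool) {s t : ℕ} (hst : s < t) (ht : t < N - (ktr b - 1)) :
    Nat.nth (Pf b) s < Nat.nth (Pf b) t :=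
  Nat.nth_lt_nth_of_lt_card (Pf_finite b) hst (by rw [card_Pf]; exact ht)

lemma nth_Pf_ge {N : ℕ} (b : Fin N → Bool) {t : ℕ} (ht : t < N - (ktr b - 1)) :
    t ≤ Nat.nth (Pf b) t :=
  Nat.le_nth (fun hf => by rw [card_Pf' b hf]; exact ht)

lemma nth_Pf_le {N : ℕ} (b : Fin N → Bool) {t : ℕ} (ht : t < N - (ktr b - 1)) :
    Nat.nth (Pf b) t ≤ t + (ktr b - 1) := by
  set z := Nat.nth (Pf b) t with hz
  have hmem : Pf b z := nth_Pf_mem b ht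
  have hcount : Nat.count (Pf b) z = t :=
    Nat.count_nth_of_lt_card_finite (Pf_finite b) (by rw [card_Pf]; exact ht)
  have hcompl := count_compl b z (le_of_lt hmem.1)
  have hmono : Nat.count (Pt b) z ≤ Nat.count (Pt b) N :=
    Nat.count_monotone _ (le_of_lt hmem.1)
  unfold ktr
  omega

noncomputable def f12 {n : ℕ} (b : Fin (n-1) → Bool) : Fin n → ℕ :=
  fun i => if (i : ℕ) + 1 ≤ ktr b then (i : ℕ) + 1
    else (i : ℕ) - Nat.nth (Pf b) ((i : ℕ) - ktr b)

lemma f12_bounds {n : ℕ} (b : Fin (n-1) → Bool) {i : ℕ} (hi : i < n) (hk : ktr b ≤ i) :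
    i - ktr b < (n-1) - (ktr b - 1) ∧ i - ktr b ≤ Nat.nth (Pf b) (i - ktr b) ∧
      Nat.nth (Pf b) (i - ktr b) + 1 ≤ i := by
  have hk1 := ktr_ge1 b
  have ht : i - ktr b < (n-1) - (ktr b - 1) := by omega
  refine ⟨ht, nth_Pf_ge b ht, ?_⟩
  have := nth_Pf_le b ht
  omega

lemma f12_desc {n : ℕ} (b : Fin (n-1) → Bool) {j : ℕ} (hj : j + 1 < n) (hk : ktr b ≤ j) :
    f12 b ⟨j + 1, hj⟩ ≤ f12 b ⟨j, by omega⟩ := by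
  have hk1 := ktr_ge1 b
  simp only [f12, Fin.val_mk]
  rw [if_neg (by omega), if_neg (by omega)]
  obtain ⟨ht, hge, hle⟩ := f12_bounds b (show j < n by omega) hk
  obtain ⟨ht', hge', hle'⟩ := f12_bounds b hj (by omega)
  have hlt : Nat.nth (Pf b) (j - ktr b) < Nat.nth (Pf b) (j + 1 - ktr b) := by
    have : j + 1 - ktr b = (j - ktr b) + 1 := by omega
    rw [this]
    exact nth_Pf_lt b (by omega) (by omega)
  omega

lemma f12_mem {n : ℕ} (b : Fin (n-1) → Bool) :
    IsCatalanWord (f12 b) ∧ ¬ Contains1_12 (f12 b) := by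
  have hk1 := ktr_ge1 b
  refine ⟨⟨?_, ?_, ?_⟩, ?_⟩
  · intro i
    simp only [f12]
    split
    · omega
    · rename_i hc
      obtain ⟨ht, hge, hle⟩ := f12_bounds b i.isLt (by omega)
      omega
  · intro h
    simp only [f12, Fin.val_mk]
    rw [if_pos (by omega)]
  · intro i h
    by_cases hc : ktr b ≤ i
    · have := f12_desc b h hc
      omega
    · simp only [f12, Fin.val_mk]
      have h2 : (i : ℕ) + 1 ≤ ktr b := by omega
      rw [if_pos h2]
      split
      · omega
      · rename_i hc2
        obtain ⟨ht, hge, hle⟩ := f12_bounds b h (by omega)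
        omega
  · rintro ⟨i, j, hj, hij, h1, h2⟩
    by_cases hc : ktr b ≤ j
    · have := f12_desc b hj hc
      omega
    · -- prefix: both i and j in prefix, values distinct
      simp only [f12, Fin.val_mk] at h1
      rw [if_pos (by omega), if_pos (by omega)] at h1
      omega

lemma f12_ktr_mono {n : ℕ} (b b' : Fin (n-1) → Bool) (hbb : f12 b = f12 b') :
    ¬ (ktr b < ktr b') := by
  intro hk
  have hk1 := ktr_ge1 b
  have hkn : ktr b' ≤ n := by
    have := ktr_le b'
    have h0 : 1 ≤ n := by
      by_contra h0
      have hn0 : n = 0 := by omega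
      subst hn0
      simp [ktr, Nat.count_zero] at hk
    omega
  have hi : ktr b < n := by omega
  have e := congrFun hbb ⟨ktr b, hi⟩
  simp only [f12, Fin.val_mk] at e
  rw [if_neg (by omega), if_pos (by omega)] at e
  omega

lemma f12_inj {n : ℕ} : Function.Injective (f12 (n := n)) := by
  intro b b' hbb
  have hk : ktr b = ktr b' := by
    have h1 := f12_ktr_mono b b' hbb
    have h2 := f12_ktr_mono b' b hbb.symm
    omega
  have hk1 := ktr_ge1 b
  have hnth : ∀ t, t < (n-1) - (ktr b - 1) → Nat.nth (Pf b) t = Nat.nth (Pf b') t := by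
    intro t ht
    have hi : ktr b + t < n := by omega
    have e := congrFun hbb ⟨ktr b + t, hi⟩
    simp only [f12, Fin.val_mk] at e
    rw [if_neg (by omega), if_neg (by omega)] at e
    have hidx : ktr b + t - ktr b = t := by omega
    have hidx' : ktr b + t - ktr b' = t := by omega
    rw [hidx, hidx'] at e
    obtain ⟨_, hge, hle⟩ := f12_bounds b (show ktr b + t < n from hi) (by omega)
    rw [hidx] at hge hle
    obtain ⟨_, hge', hle'⟩ := f12_bounds b' (show ktr b + t < n from hi) (by omega)
    rw [hk] at hidx'
    rw [show ktr b + t - ktr b' = t by omega] at hge' hle'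
    omega
  have hPiff : ∀ z, Pf b z ↔ Pf b' z := by
    have hcb := card_Pf b
    have hcb' := card_Pf b'
    intro z
    constructor
    · intro hz
      obtain ⟨t, ht, hnt⟩ := Nat.exists_lt_card_finite_nth_eq (Pf_finite b) hz
      rw [hcb] at ht
      rw [← hnt, hnth t ht]
      exact nth_Pf_mem b' (by omega)
    · intro hz
      obtain ⟨t, ht, hnt⟩ := Nat.exists_lt_card_finite_nth_eq (Pf_finite b') hz
      rw [hcb'] at ht
      rw [← hnt, ← hnth t (by omega)]
      exact nth_Pf_mem b (by omega)
  funext j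
  have hiff := hPiff (j : ℕ)
  simp only [Pf] at hiff
  rw [bext_lt b j.isLt, bext_lt b' j.isLt] at hiff
  have hjlt : (j : ℕ) < n - 1 := j.isLt
  have : (⟨(j : ℕ), j.isLt⟩ : Fin (n-1)) = j := rfl
  rw [this] at hiff
  cases h1 : b j <;> cases h2 : b' j <;> simp [h1, h2, hjlt] at hiff <;> rfl

def wext {n : ℕ} (w : Fin n → ℕ) (t : ℕ) : ℕ := if h : t < n then w ⟨t, h⟩ else 0

lemma wext_lt {n : ℕ} (w : Fin n → ℕ) {t : ℕ} (h : t < n) : wext w t = w ⟨t, h⟩ := dif_pos h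

lemma ascent_prefix {n : ℕ} {w : Fin n → ℕ} (hw : IsCatalanWord w) (hav : ¬ Contains1_12 w) :
    ∀ j : ℕ, ∀ hj : j + 1 < n, w ⟨j, by omega⟩ < w ⟨j + 1, hj⟩ →
      ∀ l, l ≤ j + 1 → ∀ hl : l < n, w ⟨l, hl⟩ = l + 1 := by
  intro j
  induction j with
  | zero =>
    intro hj hasc l hl hln
    have h0 := hw.2.1 (by omega : 0 < n)
    have hstep := hw.2.2 0 hj
    rcases (show l = 0 ∨ l = 1 by omega) with rfl | rfl
    · omega
    · have e : w ⟨1, hln⟩ = w ⟨0 + 1, hj⟩ := rfl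
      omega
  | succ j ih =>
    intro hj hasc
    by_cases hcase : w ⟨j + 1, by omega⟩ ≤ w ⟨j, by omega⟩
    · exfalso
      have h1 : 1 ≤ w ⟨j + 1, by omega⟩ := hw.1 _
      obtain ⟨i, hi, hwi⟩ := catalan_ivt hw j (by omega) (w ⟨j + 1, by omega⟩) h1 hcase
      exact hav ⟨i, j + 1, hj, by omega, by rw [hwi], hasc⟩
    · have hasc' : w ⟨j, by omega⟩ < w ⟨j + 1, by omega⟩ := by omega
      have hpre := ih (by omega) hasc'
      intro l hl hln
      by_cases hlj : l ≤ j + 1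
      · exact hpre l hlj hln
      · have hl2 : l = j + 2 := by omega
        subst hl2
        have hstep := hw.2.2 (j + 1) hj
        have hj1 := hpre (j + 1) le_rfl (by omega)
        have e : w ⟨j + 2, hln⟩ = w ⟨j + 1 + 1, hj⟩ := rfl
        omega

lemma f12_surj {n : ℕ} (hn : 1 ≤ n) (w : Fin n → ℕ) (hw : IsCatalanWord w)
    (hav : ¬ Contains1_12 w) : ∃ b : Fin (n-1) → Bool, f12 b = w := by
  classical
  set Q : ℕ → Prop := fun p => ∀ l, l < p → ∀ hl : l < n, w ⟨l, hl⟩ = l + 1 with hQdef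
  set k := Nat.findGreatest Q n with hkdef
  have hQ1 : Q 1 := by
    rw [hQdef]
    intro l hl hln
    have : l = 0 := by omega
    subst this
    rw [hw.2.1 hln]
  have hk1 : 1 ≤ k := Nat.le_findGreatest hn hQ1
  have hkn : k ≤ n := Nat.findGreatest_le n
  have hkQ : ∀ l, l < k → ∀ hl : l < n, w ⟨l, hl⟩ = l + 1 :=
    Nat.findGreatest_spec hn hQ1
  have hkmax : ∀ p, k < p → p ≤ n → ¬ Q p := fun p hp hpn =>
    Nat.findGreatest_is_greatest hp hpn
  have hdesc : ∀ j : ℕ, k ≤ j + 1 → ∀ hj : j + 1 < n, w ⟨j + 1, hj⟩ ≤ w ⟨j, by omega⟩ := by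
    intro j hkj hj
    by_contra hc
    push_neg at hc
    have hpre := ascent_prefix hw hav j hj hc
    have hQj : Q (j + 2) := by
      rw [hQdef]
      intro l hl hln
      exact hpre l (by omega) hln
    exact hkmax (j + 2) (by omega) (by omega) hQj
  have hub : ∀ i : ℕ, ∀ hi : i < n, k ≤ i + 1 → w ⟨i, hi⟩ ≤ k := by
    intro i
    induction i with
    | zero =>
      intro hi hk0
      rw [hw.2.1 hi]; omega
    | succ i ih =>
      intro hi hk0
      by_cases hcase : k ≤ i + 1
      · have h1 := ih (by omega) hcase
        have h2 := hdesc i hcase hi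
        omega
      · have hik : i + 1 < k := by omega
        have := hkQ (i + 1) hik hi
        omega
  set m := n - k with hmdef
  set z : ℕ → ℕ := fun t => k + t - wext w (k + t) with hzdef
  have hzval : ∀ t (ht : k + t < n), z t = k + t - w ⟨k + t, ht⟩ := by
    intro t ht
    rw [hzdef]
    simp only
    rw [wext_lt w ht]
  have hwb : ∀ t, t < m → 1 ≤ wext w (k + t) ∧ wext w (k + t) ≤ k := by
    intro t ht
    rw [wext_lt w (show k + t < n by omega)]
    exact ⟨hw.1 _, hub (k + t) (by omega) (by omega)⟩
  have hzstep : ∀ t, t + 1 < m → z t < z (t + 1) := by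
    intro t ht
    have h1 := hwb t (by omega)
    have h2 := hwb (t + 1) (by omega)
    have h3 : wext w (k + (t + 1)) ≤ wext w (k + t) := by
      rw [wext_lt w (show k + (t+1) < n by omega), wext_lt w (show k + t < n by omega)]
      exact hdesc (k + t) (by omega) (by omega)
    rw [hzdef]
    simp only
    omega
  have hzmono : ∀ s t, s < t → t < m → z s < z t := by
    intro s t hst htm
    induction t with
    | zero => omega
    | succ t iht =>
      by_cases hst' : s = t
      · subst hst'; exact hzstep s htm
      · exact lt_trans (iht (by omega) (by omega)) (hzstep t htm)
  have hzlt : ∀ t, t < m → z t < n - 1 := by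
    intro t ht
    have h1 := hwb t ht
    rw [hzdef]
    simp only
    omega
  set b : Fin (n-1) → Bool :=
    fun j => if (∃ t, t < m ∧ z t = (j : ℕ)) then false else true with hbdef
  have hPb : ∀ zz : ℕ, Pf b zz ↔ (∃ t, t < m ∧ z t = zz) := by
    intro zz
    constructor
    · rintro ⟨h1, h2⟩
      rw [bext_lt b h1] at h2
      rw [hbdef] at h2
      simp only [Fin.val_mk] at h2
      by_contra hc
      rw [if_neg hc] at h2
      simp at h2
    · intro hex
      obtain ⟨t, htm, hzt⟩ := hex
      have hzz : zz < n - 1 := by rw [← hzt]; exact hzlt t htm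
      refine ⟨hzz, ?_⟩
      rw [bext_lt b hzz]
      rw [hbdef]
      simp only [Fin.val_mk]
      rw [if_pos ⟨t, htm, hzt⟩]
  have hfilter : ∀ y, (Finset.range y).filter (Pf b) =
      (Finset.filter (fun t => z t < y) (Finset.range m)).image z := by
    intro y
    ext u
    simp only [Finset.mem_filter, Finset.mem_range, Finset.mem_image]
    constructor
    · rintro ⟨hu, hPu⟩
      obtain ⟨t, htm, hzt⟩ := (hPb u).1 hPu
      exact ⟨t, ⟨htm, by omega⟩, hzt⟩
    · rintro ⟨t, ⟨htm, hty⟩, rfl⟩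
      exact ⟨hty, (hPb (z t)).2 ⟨t, htm, rfl⟩⟩
  have hinjz : ∀ s ∈ Finset.range m, ∀ t ∈ Finset.range m, z s = z t → s = t := by
    intro s hs t ht hst
    simp only [Finset.mem_range] at hs ht
    rcases Nat.lt_trichotomy s t with h | h | h
    · have := hzmono s t h ht; omega
    · exact h
    · have := hzmono t s h hs; omega
  have hcount_m : Nat.count (Pf b) (n - 1) = m := by
    rw [Nat.count_eq_card_filter_range, hfilter]
    have : Finset.filter (fun t => z t < n - 1) (Finset.range m) = Finset.range m := by
      apply Finset.filter_true_of_mem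
      intro t ht
      simp only [Finset.mem_range] at ht
      exact hzlt t ht
    rw [this, Finset.card_image_of_injOn hinjz, Finset.card_range]
  have hktr : ktr b = k := by
    have hc := count_compl b (n - 1) le_rfl
    rw [hcount_m] at hc
    rw [ktr]
    omega
  have hcount_t : ∀ t, t < m → Nat.count (Pf b) (z t) = t := by
    intro t0 ht0
    rw [Nat.count_eq_card_filter_range, hfilter]
    have : Finset.filter (fun t => z t < z t0) (Finset.range m) = Finset.range t0 := by
      ext t
      simp only [Finset.mem_filter, Finset.mem_range]
      constructor
      · rintro ⟨htm, hlt⟩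
        by_contra hc
        push_neg at hc
        rcases Nat.lt_or_ge t0 t with h | h
        · have := hzmono t0 t h htm; omega
        · have : t = t0 := by omega
          subst this; omega
      · intro htt0
        exact ⟨by omega, hzmono t t0 htt0 ht0⟩
    rw [this]
    have hinj2 : Set.InjOn z ↑(Finset.range t0) := by
      intro s hs t ht hst
      simp only [Finset.coe_range, Set.mem_Iio] at hs ht
      exact hinjz s (Finset.mem_range.mpr (by omega)) t (Finset.mem_range.mpr (by omega)) hst
    rw [Finset.card_image_of_injOn hinj2, Finset.card_range]
  have hnth : ∀ t, t < m → Nat.nth (Pf b) t = z t := by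
    intro t htm
    have hmem : Pf b (z t) := (hPb (z t)).2 ⟨t, htm, rfl⟩
    have h := Nat.nth_count hmem
    rwa [hcount_t t htm] at h
  refine ⟨b, ?_⟩
  funext i
  simp only [f12]
  by_cases hik : (i : ℕ) + 1 ≤ ktr b
  · rw [if_pos hik]
    rw [hktr] at hik
    have := hkQ (i : ℕ) (by omega) i.isLt
    rw [show (⟨(i : ℕ), i.isLt⟩ : Fin n) = i from rfl] at this
    omega
  · rw [if_neg hik]
    rw [hktr] at hik ⊢
    have htm : (i : ℕ) - k < m := by have := i.isLt; omega
    rw [hnth _ htm]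
    have hiz : z ((i : ℕ) - k) = (i : ℕ) - w i := by
      have hki : k + ((i : ℕ) - k) = (i : ℕ) := by omega
      rw [hzdef]
      simp only
      rw [hki, wext_lt w i.isLt]
    rw [hiz]
    have hwi : w i ≤ k := by
      have := hub (i : ℕ) i.isLt (by omega)
      rw [show (⟨(i : ℕ), i.isLt⟩ : Fin n) = i from rfl] at this
      exact this
    have := hw.1 i
    omega

def f23 {n : ℕ} (b : Fin (n-1) → Bool) : Fin n → ℕ :=
  fun i => if h : (i : ℕ) = 0 then 1 else
    (if b ⟨(i : ℕ) - 1, by have := i.isLt; omega⟩ then 2 else 1)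

lemma f23_ge1 {n : ℕ} (b : Fin (n-1) → Bool) (i : Fin n) : 1 ≤ f23 b i := by
  unfold f23; split
  · exact le_refl 1
  · split <;> omega

lemma f23_le2 {n : ℕ} (b : Fin (n-1) → Bool) (i : Fin n) : f23 b i ≤ 2 := by
  unfold f23; split
  · omega
  · split <;> omega

lemma f23_mem {n : ℕ} (b : Fin (n-1) → Bool) :
    IsCatalanWord (f23 b) ∧ ¬ Contains1_23 (f23 b) := by
  refine ⟨⟨f23_ge1 b, ?_, ?_⟩, ?_⟩
  · intro h; simp [f23]
  · intro i h
    have h1 := f23_ge1 b ⟨i, by omega⟩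
    have h2 := f23_le2 b ⟨i + 1, h⟩
    omega
  · rintro ⟨i, j, hj, hij, h1, h2⟩
    have g1 := f23_ge1 b ⟨i, by omega⟩
    have g2 := f23_le2 b ⟨j + 1, hj⟩
    omega

lemma f23_inj {n : ℕ} : Function.Injective (f23 (n := n)) := by
  intro b b' hbb
  funext j
  have hj1 : (j : ℕ) + 1 < n := by have := j.isLt; omega
  have := congrFun hbb ⟨(j : ℕ) + 1, hj1⟩
  simp only [f23] at this
  rw [dif_neg (by omega), dif_neg (by omega)] at this
  simp only [Nat.add_sub_cancel] at this
  have hj : (⟨(j : ℕ), j.isLt⟩ : Fin (n-1)) = j := by ext; rfl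
  rw [hj] at this
  cases hb : b j <;> cases hb' : b' j <;> simp [hb, hb'] at this <;> rfl

lemma f23_surj {n : ℕ} (w : Fin n → ℕ) (hw : IsCatalanWord w) (hav : ¬ Contains1_23 w) :
    ∃ b : Fin (n-1) → Bool, f23 b = w := by
  -- all values ≤ 2
  have hle2 : ∀ t : ℕ, ∀ ht : t < n, w ⟨t, ht⟩ ≤ 2 := by
    intro t
    induction t with
    | zero => intro ht; rw [hw.2.1 ht]; omega
    | succ t ih =>
      intro ht
      by_contra hc
      push_neg at hc
      have hih := ih (by omega)
      have hstep := hw.2.2 t ht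
      have hwt : w ⟨t, by omega⟩ = 2 := by omega
      have ht0 : t ≠ 0 := by
        intro h0
        have := hw.2.1 (by omega : 0 < n)
        subst h0
        simp_all
      exact hav ⟨0, t, ht, by omega, by rw [hw.2.1 (by omega)]; omega⟩
  refine ⟨fun j => decide (w ⟨(j : ℕ) + 1, by have := j.isLt; omega⟩ = 2), ?_⟩
  funext i
  simp only [f23]
  split
  · rename_i h
    have : i = ⟨0, by have := i.isLt; omega⟩ := by ext; exact h
    rw [this, hw.2.1]
  · rename_i h
    have hi : ((i : ℕ) - 1) + 1 = (i : ℕ) := by omega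
    have hival : (⟨((i:ℕ) - 1) + 1, by have := i.isLt; omega⟩ : Fin n) = i := by ext; simp [hi]
    split
    · rename_i hb
      rw [decide_eq_true_iff] at hb
      rw [hival] at hb
      omega
    · rename_i hb
      rw [decide_eq_true_iff] at hb
      rw [hival] at hb
      have := hle2 (i : ℕ) i.isLt
      have := hw.1 i
      have : w i = 1 := by
        have h2 : w ⟨(i:ℕ), i.isLt⟩ ≤ 2 := hle2 _ _
        have h1 : 1 ≤ w i := hw.1 i
        have : (⟨(i:ℕ), i.isLt⟩ : Fin n) = i := by ext; rfl
        rw [this] at h2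
        omega
      omega

def f21 {n : ℕ} (b : Fin (n-1) → Bool) : Fin n → ℕ :=
  fun i => 1 + Nat.count (fun t => bext b t = true) (i : ℕ)

lemma f21_step {n : ℕ} (b : Fin (n-1) → Bool) (t : ℕ) (h : t + 1 < n) :
    f21 b ⟨t + 1, h⟩ = f21 b ⟨t, by omega⟩ + (if bext b t then 1 else 0) := by
  simp only [f21, Fin.val_mk, Nat.count_succ]
  split <;> omega

lemma f21_mem {n : ℕ} (b : Fin (n-1) → Bool) :
    IsCatalanWord (f21 b) ∧ ¬ Contains1_21 (f21 b) := by
  have hmono : ∀ s t : ℕ, s ≤ t →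
      Nat.count (fun t => bext b t = true) s ≤ Nat.count (fun t => bext b t = true) t :=
    fun s t h => Nat.count_monotone _ h
  refine ⟨⟨fun i => by simp [f21], fun h => by simp [f21], ?_⟩, ?_⟩
  · intro i h
    have := f21_step b i h
    split at this <;> omega
  · rintro ⟨i, j, hj, hij, h1, h2⟩
    simp only [f21] at h2
    have := hmono j (j + 1) (by omega)
    omega

lemma f21_inj {n : ℕ} : Function.Injective (f21 (n := n)) := by
  intro b b' hbb
  funext j
  have hj1 : (j : ℕ) + 1 < n := by have := j.isLt; omega
  have e1 := congrFun hbb ⟨(j : ℕ) + 1, hj1⟩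
  have e0 := congrFun hbb ⟨(j : ℕ), by omega⟩
  rw [f21_step b (j : ℕ) hj1, f21_step b' (j : ℕ) hj1] at e1
  rw [bext_lt b j.isLt, bext_lt b' j.isLt] at e1
  have hjj : (⟨(j : ℕ), j.isLt⟩ : Fin (n-1)) = j := rfl
  rw [hjj] at e1
  cases h1 : b j <;> cases h2 : b' j <;> rw [h1, h2] at e1 <;> simp at e1 <;> omega

lemma f21_surj {n : ℕ} (w : Fin n → ℕ) (hw : IsCatalanWord w) (hav : ¬ Contains1_21 w) :
    ∃ b : Fin (n-1) → Bool, f21 b = w := by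
  have hmono : ∀ i : ℕ, ∀ h : i + 1 < n, w ⟨i, by omega⟩ ≤ w ⟨i + 1, h⟩ := by
    intro i h
    by_contra hc
    push_neg at hc
    have h1 : 1 ≤ w ⟨i + 1, h⟩ := hw.1 _
    obtain ⟨i', hi', hwi'⟩ := catalan_ivt hw i (by omega) (w ⟨i + 1, h⟩) h1 (by omega)
    have hne : i' ≠ i := by
      intro he; subst he; omega
    exact hav ⟨i', i, h, by omega, by rw [hwi'], hc⟩
  refine ⟨fun j => decide (wext w ((j : ℕ) + 1) = wext w (j : ℕ) + 1), ?_⟩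
  set b : Fin (n-1) → Bool := fun j => decide (wext w ((j : ℕ) + 1) = wext w (j : ℕ) + 1) with hbdef
  funext i
  rcases i with ⟨iv, hiv⟩
  induction iv with
  | zero =>
    show 1 + Nat.count _ 0 = _
    rw [Nat.count_zero, hw.2.1 hiv]
  | succ t ih =>
    have iht := ih (by omega)
    have htn : t < n - 1 := by omega
    rw [f21_step b t hiv, iht]
    rw [bext_lt b htn]
    have hbt : b ⟨t, htn⟩ = decide (wext w (t + 1) = wext w t + 1) := rfl
    rw [hbt, wext_lt w hiv, wext_lt w (show t < n by omega)]
    have hstep := hw.2.2 t hiv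
    have hm := hmono t hiv
    by_cases hq : w ⟨t + 1, hiv⟩ = w ⟨t, by omega⟩ + 1
    · simp [hq]
    · simp [hq]; omega

theorem catalan_avoid_1_12_1_21_1_23 (n : ℕ) (hn : 1 ≤ n) :
    Set.ncard {w : Fin n → ℕ | IsCatalanWord w ∧ ¬ Contains1_12 w} = 2 ^ (n - 1) ∧
    Set.ncard {w : Fin n → ℕ | IsCatalanWord w ∧ ¬ Contains1_21 w} = 2 ^ (n - 1) ∧
    Set.ncard {w : Fin n → ℕ | IsCatalanWord w ∧ ¬ Contains1_23 w} = 2 ^ (n - 1) := by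
  refine ⟨?_, ?_, ?_⟩
  · refine card_bij _ f12 f12_inj ?_
    ext w
    simp only [Set.mem_range, Set.mem_setOf_eq]
    constructor
    · rintro ⟨b, rfl⟩; exact f12_mem b
    · rintro ⟨hw, hav⟩; exact f12_surj hn w hw hav
  · refine card_bij _ f21 f21_inj ?_
    ext w
    simp only [Set.mem_range, Set.mem_setOf_eq]
    constructor
    · rintro ⟨b, rfl⟩; exact f21_mem b
    · rintro ⟨hw, hav⟩; exact f21_surj w hw hav
  · refine card_bij _ f23 f23_inj ?_
    ext w
    simp only [Set.mem_range, Set.mem_setOf_eq]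
    constructor
    · rintro ⟨b, rfl⟩; exact f23_mem b
    · rintro ⟨hw, hav⟩; exact f23_surj w hw hav
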